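/- Let G, A ⊆ ℝ^{d+1} be finite sets such that M(G) = ⋂_{a∈A} {x ∈ ℝ^{d+1} : x₀ − a₀ ≤ max(x_j − a_j : j ∈ {1,…,d})}. Then the closure of the complement ℝ^{d+1} \ M(G) equals ⋃_{a∈A} {x ∈ ℝ^{d+1} : x₀ − a₀ ≥ max(x_j − a_j : j ∈ {1,…,d})}, which equals −M(−A); in particular the closure of the complement of the monomial max-tropical cone M(G) is a min-tropical cone in ℝ^{d+1}. -/

import Mathlib

def Mcone {d : ℕ} (G : Set (Fin (d + 1) → ℝ)) : Set (Fin (d + 1) → ℝ) :=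
  ⋃ g ∈ G, {x | ∀ j, j ≠ 0 → x 0 - g 0 ≤ x j - g j}

/-- `S ⊆ ℝ^{d+1}` is a min-tropical cone (closed under coordinatewise min of real
translates), as in the real setting of the paper. -/
def IsMinTropConvexReal {d : ℕ} (S : Set (Fin (d + 1) → ℝ)) : Prop :=
  ∀ lam mu : ℝ, ∀ x ∈ S, ∀ y ∈ S, (fun k => min (lam + x k) (mu + y k)) ∈ S

lemma closure_strict_eq {d : ℕ} (a : Fin (d + 1) → ℝ) :
    closure {x : Fin (d + 1) → ℝ | ∀ j, j ≠ 0 → x j - a j < x 0 - a 0}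
      = {x : Fin (d + 1) → ℝ | ∀ j, j ≠ 0 → x j - a j ≤ x 0 - a 0} := by
  apply subset_antisymm
  · have hcl : IsClosed {x : Fin (d + 1) → ℝ | ∀ j, j ≠ 0 → x j - a j ≤ x 0 - a 0} := by
      have : {x : Fin (d + 1) → ℝ | ∀ j, j ≠ 0 → x j - a j ≤ x 0 - a 0}
          = ⋂ j ∈ {j : Fin (d+1) | j ≠ 0}, {x | x j - a j ≤ x 0 - a 0} := by
        ext x; simp [Set.mem_iInter]
      rw [this]
      refine isClosed_biInter fun j _ => isClosed_le (by fun_prop) (by fun_prop)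
    exact closure_minimal (fun x hx j hj => le_of_lt (hx j hj)) hcl
  · intro x hx
    have htend : Filter.Tendsto
        (fun n : ℕ => fun k : Fin (d+1) => if k = 0 then x 0 + 1/(n+1) else x k)
        Filter.atTop (nhds x) := by
      rw [tendsto_pi_nhds]
      intro k
      by_cases hk : k = 0
      · subst hk
        simp only [if_pos rfl]
        have := (tendsto_one_div_add_atTop_nhds_zero_nat :
          Filter.Tendsto (fun n : ℕ => 1 / ((n : ℝ) + 1)) Filter.atTop (nhds 0))
        have h2 := this.const_add (x 0)
        simpa using h2
      · simp only [if_neg hk]; exact tendsto_const_nhds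
    refine mem_closure_of_tendsto htend (Filter.Eventually.of_forall fun n => ?_)
    intro j hj
    simp only [if_neg hj, if_pos rfl]
    have h1 : (0:ℝ) < 1/(n+1) := by positivity
    calc x j - a j ≤ x 0 - a 0 := hx j hj
      _ < x 0 + 1/(n+1) - a 0 := by linarith

/-- If `M(G) = ⋂_{a∈A} {x : x₀ - a₀ ≤ max (x_j - a_j : j ∈ [d])}`, then the closure of
the complement `ℝ^{d+1} \ M(G)` equals `⋃_{a∈A} {x : x₀ - a₀ ≥ max (x_j - a_j : j ∈ [d])}`,
which equals `-M(-A)`; in particular this closure is a min-tropical cone. -/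
theorem complementary_monomial_cone {d : ℕ} (G A : Finset (Fin (d + 1) → ℝ))
    (hA : Mcone (G : Set (Fin (d + 1) → ℝ))
      = ⋂ a ∈ A, {x : Fin (d + 1) → ℝ | ∃ j, j ≠ 0 ∧ x 0 - a 0 ≤ x j - a j}) :
    closure ((Mcone (G : Set (Fin (d + 1) → ℝ)))ᶜ)
        = ⋃ a ∈ A, {x : Fin (d + 1) → ℝ | ∀ j, j ≠ 0 → x j - a j ≤ x 0 - a 0}
    ∧ closure ((Mcone (G : Set (Fin (d + 1) → ℝ)))ᶜ)
        = (fun x => -x) ⁻¹' Mcone ((fun a => -a) '' (A : Set (Fin (d + 1) → ℝ)))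
    ∧ IsMinTropConvexReal (closure ((Mcone (G : Set (Fin (d + 1) → ℝ)))ᶜ)) := by
  have hcompl : (Mcone (G : Set (Fin (d + 1) → ℝ)))ᶜ
      = ⋃ a ∈ A, {x : Fin (d + 1) → ℝ | ∀ j, j ≠ 0 → x j - a j < x 0 - a 0} := by
    rw [hA]
    ext x
    simp only [Set.mem_compl_iff, Set.mem_iInter, Set.mem_iUnion, Set.mem_setOf_eq,
      not_forall]
    constructor
    · rintro ⟨a, ha, hna⟩
      push_neg at hna
      exact ⟨a, ha, hna⟩
    · rintro ⟨a, ha, hstrict⟩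
      refine ⟨a, ha, ?_⟩
      rintro ⟨j, hj, hle⟩
      exact absurd hle (not_le.mpr (hstrict j hj))
  have h1 : closure ((Mcone (G : Set (Fin (d + 1) → ℝ)))ᶜ)
      = ⋃ a ∈ A, {x : Fin (d + 1) → ℝ | ∀ j, j ≠ 0 → x j - a j ≤ x 0 - a 0} := by
    rw [hcompl, A.closure_biUnion]
    exact Set.iUnion₂_congr fun a _ => closure_strict_eq a
  refine ⟨h1, ?_, ?_⟩
  · rw [h1]
    ext x
    simp only [Mcone, Set.mem_preimage, Set.mem_iUnion, Set.mem_setOf_eq,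
      Set.mem_image, Finset.mem_coe]
    constructor
    · rintro ⟨a, ha, hx⟩
      exact ⟨-a, ⟨a, ha, rfl⟩, fun j hj => by
        have := hx j hj; simp only [Pi.neg_apply]; linarith⟩
    · rintro ⟨b, ⟨a, ha, rfl⟩, hx⟩
      refine ⟨a, ha, fun j hj => ?_⟩
      have := hx j hj; simp only [Pi.neg_apply] at this; linarith
  · rw [h1]
    intro lam mu x hx y hy
    simp only [Set.mem_iUnion, Set.mem_setOf_eq] at hx hy ⊢
    obtain ⟨a, ha, hxa⟩ := hx
    obtain ⟨b, hb, hyb⟩ := hy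
    rcases le_total (lam + x 0) (mu + y 0) with h | h
    · refine ⟨a, ha, fun j hj => ?_⟩
      have h0 : min (lam + x 0) (mu + y 0) = lam + x 0 := min_eq_left h
      rw [h0]
      have := hxa j hj
      calc min (lam + x j) (mu + y j) - a j ≤ lam + x j - a j := by
            have := min_le_left (lam + x j) (mu + y j); linarith
        _ ≤ lam + x 0 - a 0 := by linarith
    · refine ⟨b, hb, fun j hj => ?_⟩
      have h0 : min (lam + x 0) (mu + y 0) = mu + y 0 := min_eq_right h
      rw [h0]
      have := hyb j hj
      calc min (lam + x j) (mu + y j) - b j ≤ mu + y j - b j := by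
            have := min_le_right (lam + x j) (mu + y j); linarith
        _ ≤ mu + y 0 - b 0 := by linarith
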